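/- Fix an integer d >= 1 and define inductively a set T_d of finite integer sequences: the initial sequence is (4) if d = 1, and (3,2,...,2,3) with d-2 twos in the middle if d >= 2; and T_d is closed under the two operations (e_1,...,e_r) |-> (2, e_1, ..., e_{r-1}, e_r + 1) and (e_1,...,e_r) |-> (e_1 + 1, e_2, ..., e_r, 2). Then every T-chain of type (d,n,a) belongs to T_d; that is, every sequence of integers >= 2 whose Hirzebruch-Jung value equals d*n^2/(d*n*a - 1) for some n >= 2, 0 < a < n with gcd(a,n) = 1, is obtained from the initial sequence by finitely many applications of the two operations. -/

import Mathlib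

/-- Hirzebruch-Jung continued fraction value `[e₁,...,e_r] = e₁ - 1/[e₂,...,e_r]`. -/
def hjVal : List ℤ → ℚ
  | [] => 0
  | e :: l => (e : ℚ) - 1 / hjVal l

/-- Add `1` to the first entry of a list. -/
def plusFirst : List ℤ → List ℤ
  | [] => []
  | e :: l => (e + 1) :: l

/-- Add `1` to the last entry of a list. -/
def plusLast : List ℤ → List ℤ
  | [] => []
  | [e] => [e + 1]
  | e :: l => e :: plusLast l

/-- The inductively defined family `T_d`: it contains the initial chain (`[4]` for `d = 1`,
`[3,2,...,2,3]` with `d-2` twos for `d ≥ 2`) and is closed under the two augmentation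
operations `(e₁,...,e_r) ↦ (2,e₁,...,e_{r-1},e_r+1)` and `(e₁,...,e_r) ↦ (e₁+1,e₂,...,e_r,2)`. -/
inductive InTd (d : ℕ) : List ℤ → Prop
  | init : InTd d (if d = 1 then [4] else 3 :: (List.replicate (d - 2) (2 : ℤ) ++ [3]))
  | left {e : List ℤ} : InTd d e → InTd d (2 :: plusLast e)
  | right {e : List ℤ} : InTd d e → InTd d (plusFirst e ++ [2])

/-- Continuant matrix of a Hirzebruch–Jung continued fraction, as a 4-tuple `(A, B, C, D)`
representing the product of the matrices `[[e, -1], [1, 0]]`. -/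
def hjMat : List ℤ → ℤ × ℤ × ℤ × ℤ
  | [] => (1, 0, 0, 1)
  | e :: l => (e * (hjMat l).1 - (hjMat l).2.2.1, e * (hjMat l).2.1 - (hjMat l).2.2.2,
      (hjMat l).1, (hjMat l).2.1)

lemma prodext {a b c d a' b' c' d' : ℤ} (h1 : a = a') (h2 : b = b') (h3 : c = c')
    (h4 : d = d') : ((a, b, c, d) : ℤ × ℤ × ℤ × ℤ) = (a', b', c', d') := by
  subst h1; subst h2; subst h3; subst h4; rfl

lemma hjVal_spec (l : List ℤ) (h : ∀ x ∈ l, 2 ≤ x) :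
    0 ≤ (hjMat l).2.2.1 ∧ (hjMat l).2.2.1 < (hjMat l).1 ∧
    (l ≠ [] → 1 ≤ (hjMat l).2.2.1) ∧
    hjVal l = ((hjMat l).1 : ℚ) / ((hjMat l).2.2.1 : ℚ) := by
  induction l with
  | nil => simp [hjMat, hjVal]
  | cons e t ih =>
    obtain ⟨h0, h1, _, h3⟩ := ih (fun x hx => h x (List.mem_cons_of_mem _ hx))
    have he : (2:ℤ) ≤ e := h e List.mem_cons_self
    have hA1 : (1:ℤ) ≤ (hjMat t).1 := by omega
    have h2A : 2 * (hjMat t).1 ≤ e * (hjMat t).1 :=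
      mul_le_mul_of_nonneg_right he (by omega)
    refine ⟨by simp only [hjMat]; omega, by simp only [hjMat]; linarith, fun _ => by
      simp only [hjMat]; omega, ?_⟩
    have hAq : ((hjMat t).1 : ℚ) ≠ 0 := by exact_mod_cast (by omega : (hjMat t).1 ≠ 0)
    simp only [hjVal, hjMat]
    rw [h3, one_div_div]
    push_cast
    field_simp

lemma one_lt_hjVal {l : List ℤ} (hl : l ≠ []) (h : ∀ x ∈ l, 2 ≤ x) : 1 < hjVal l := by
  obtain ⟨h0, h1, h2, h3⟩ := hjVal_spec l h
  have hC : (1:ℤ) ≤ (hjMat l).2.2.1 := h2 hl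
  have hCq : (0:ℚ) < ((hjMat l).2.2.1 : ℚ) := by exact_mod_cast (by omega : (0:ℤ) < _)
  rw [h3, lt_div_iff₀ hCq, one_mul]
  exact_mod_cast h1

lemma hjVal_cons_lt {a : ℤ} {t : List ℤ} (ht : t ≠ []) (h : ∀ x ∈ t, 2 ≤ x) :
    (a:ℚ) - 1 < hjVal (a :: t) ∧ hjVal (a :: t) < a := by
  have hu := one_lt_hjVal ht h
  have hu0 : (0:ℚ) < hjVal t := by linarith
  have h1 : 0 < 1 / hjVal t := by positivity
  have h2 : 1 / hjVal t < 1 := by rw [div_lt_one hu0]; linarith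
  constructor <;> (simp only [hjVal]; linarith)

lemma hjVal_inj : ∀ (e f : List ℤ), (∀ x ∈ e, 2 ≤ x) → (∀ x ∈ f, 2 ≤ x) →
    hjVal e = hjVal f → e = f := by
  intro e
  induction e with
  | nil =>
    intro f _ hf hv
    cases f with
    | nil => rfl
    | cons b s =>
      have h1 := one_lt_hjVal (List.cons_ne_nil b s) hf
      rw [← hv] at h1
      simp only [hjVal] at h1
      exact absurd h1 (by norm_num)
  | cons a t ih =>
    intro f he hf hv
    cases f with
    | nil =>
      have h1 := one_lt_hjVal (List.cons_ne_nil a t) he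
      rw [hv] at h1
      simp only [hjVal] at h1
      exact absurd h1 (by norm_num)
    | cons b s =>
      have het : ∀ x ∈ t, 2 ≤ x := fun x hx => he x (List.mem_cons_of_mem _ hx)
      have hes : ∀ x ∈ s, 2 ≤ x := fun x hx => hf x (List.mem_cons_of_mem _ hx)
      cases t with
      | nil =>
        cases s with
        | nil =>
          have hab : (a:ℚ) = b := by simpa [hjVal] using hv
          have : a = b := by exact_mod_cast hab
          simp [this]
        | cons s1 s2 =>
          exfalso
          obtain ⟨hb1, hb2⟩ := hjVal_cons_lt (a := b) (List.cons_ne_nil s1 s2) hes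
          rw [← hv] at hb1 hb2
          simp only [hjVal, div_zero, sub_zero, one_div] at hb1 hb2
          have c1 : (b:ℤ) - 1 < a := by exact_mod_cast hb1
          have c2 : (a:ℤ) < b := by exact_mod_cast hb2
          omega
      | cons t1 t2 =>
        cases s with
        | nil =>
          exfalso
          obtain ⟨ha1, ha2⟩ := hjVal_cons_lt (a := a) (List.cons_ne_nil t1 t2) het
          rw [hv] at ha1 ha2
          simp only [hjVal, div_zero, sub_zero, one_div] at ha1 ha2
          have c1 : (a:ℤ) - 1 < b := by exact_mod_cast ha1
          have c2 : (b:ℤ) < a := by exact_mod_cast ha2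
          omega
        | cons s1 s2 =>
          obtain ⟨ha1, ha2⟩ := hjVal_cons_lt (a := a) (List.cons_ne_nil t1 t2) het
          obtain ⟨hb1, hb2⟩ := hjVal_cons_lt (a := b) (List.cons_ne_nil s1 s2) hes
          have hab : a = b := by
            have h1 : (a:ℚ) - 1 < (b:ℚ) := by rw [hv] at ha1; linarith
            have h2 : (b:ℚ) - 1 < (a:ℚ) := by rw [← hv] at hb1; linarith
            have c1 : (a:ℤ) - 1 < b := by exact_mod_cast h1
            have c2 : (b:ℤ) - 1 < a := by exact_mod_cast h2
            omega
          subst hab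
          have hu := one_lt_hjVal (List.cons_ne_nil t1 t2) het
          have hw := one_lt_hjVal (List.cons_ne_nil s1 s2) hes
          have hv2 : (a:ℚ) - 1/hjVal (t1::t2) = (a:ℚ) - 1/hjVal (s1::s2) := by
            simpa only [hjVal] using hv
          have h3 : 1/hjVal (t1::t2) = 1/hjVal (s1::s2) := by linarith
          have hA : hjVal (t1::t2) ≠ 0 := by linarith
          have hB : hjVal (s1::s2) ≠ 0 := by linarith
          have h4 : hjVal (t1::t2) = hjVal (s1::s2) := by
            field_simp at h3
            linarith
          have := ih (s1::s2) het hes h4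
          rw [this]

lemma hjMat_append (l : List ℤ) (x : ℤ) :
    hjMat (l ++ [x]) = (x * (hjMat l).1 + (hjMat l).2.1, -(hjMat l).1,
      x * (hjMat l).2.2.1 + (hjMat l).2.2.2, -(hjMat l).2.2.1) := by
  induction l with
  | nil =>
    show hjMat [x] = _
    simp only [hjMat]
    exact prodext (by ring) (by ring) (by ring) (by ring)
  | cons e t ih =>
    show hjMat (e :: (t ++ [x])) = _
    simp only [hjMat, ih]
    exact prodext (by ring) (by ring) (by ring) (by ring)

lemma hjMat_plusFirst (l : List ℤ) (hl : l ≠ []) :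
    hjMat (plusFirst l) = ((hjMat l).1 + (hjMat l).2.2.1, (hjMat l).2.1 + (hjMat l).2.2.2,
      (hjMat l).2.2.1, (hjMat l).2.2.2) := by
  cases l with
  | nil => exact absurd rfl hl
  | cons e t =>
    simp only [plusFirst, hjMat]
    exact prodext (by ring) (by ring) (by ring) (by ring)

lemma hjMat_plusLast : ∀ (l : List ℤ), l ≠ [] →
    hjMat (plusLast l) = ((hjMat l).1 - (hjMat l).2.1, (hjMat l).2.1,
      (hjMat l).2.2.1 - (hjMat l).2.2.2, (hjMat l).2.2.2) := by
  intro l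
  induction l with
  | nil => intro h; exact absurd rfl h
  | cons e t ih =>
    intro _
    cases t with
    | nil =>
      simp only [plusLast, hjMat]
      exact prodext (by ring) (by ring) (by ring) (by ring)
    | cons f s =>
      have h2 := ih (List.cons_ne_nil f s)
      show hjMat (e :: plusLast (f :: s)) = _
      simp only [hjMat, h2]
      exact prodext (by ring) (by ring) (by ring) (by ring)

lemma mem_plusFirst {l : List ℤ} (h : ∀ x ∈ l, 2 ≤ x) : ∀ x ∈ plusFirst l, 2 ≤ x := by
  cases l with
  | nil => simp [plusFirst]
  | cons e t =>
    intro x hx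
    simp only [plusFirst, List.mem_cons] at hx
    rcases hx with rfl | hx
    · have := h e List.mem_cons_self; omega
    · exact h x (List.mem_cons_of_mem _ hx)

lemma mem_plusLast : ∀ {l : List ℤ}, (∀ x ∈ l, 2 ≤ x) → ∀ x ∈ plusLast l, 2 ≤ x := by
  intro l
  induction l with
  | nil => simp [plusLast]
  | cons e t ih =>
    intro h
    cases t with
    | nil =>
      intro x hx
      simp only [plusLast, List.mem_singleton] at hx
      have := h e List.mem_cons_self
      omega
    | cons f s =>
      intro x hx
      rcases List.mem_cons.mp hx with rfl | hx
      · exact h _ List.mem_cons_self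
      · exact ih (fun y hy => h y (List.mem_cons_of_mem _ hy)) x hx

lemma hjMat_replicate (k : ℕ) :
    hjMat (List.replicate k (2:ℤ) ++ [3]) = (2*(k:ℤ) + 3, -((k:ℤ) + 1), 2*(k:ℤ) + 1, -(k:ℤ)) := by
  induction k with
  | zero =>
    show hjMat [3] = _
    simp only [hjMat]
    push_cast
    exact prodext (by ring) (by ring) (by ring) (by ring)
  | succ k ih =>
    rw [List.replicate_succ, List.cons_append]
    simp only [hjMat, ih]
    push_cast
    exact prodext (by ring) (by ring) (by ring) (by ring)

lemma exists_chain (d : ℕ) (hd : 1 ≤ d) :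
    ∀ N : ℕ, ∀ n a : ℤ, n ≤ (N : ℤ) → 2 ≤ n → 0 < a → a < n → Int.gcd a n = 1 →
    ∃ c : List ℤ, c ≠ [] ∧ (∀ x ∈ c, 2 ≤ x) ∧ InTd d c ∧
      hjMat c = ((d:ℤ) * n ^ 2, -((d:ℤ) * n * (n - a) - 1),
        (d:ℤ) * n * a - 1, -((d:ℤ) * a * (n - a) - 1)) := by
  intro N
  induction N with
  | zero => intro n a h1 h2 _ _ _; exfalso; omega
  | succ N ih =>
    intro n a hN h2 ha0 han hg
    rcases eq_or_lt_of_le h2 with hn2 | hn3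
    · -- n = 2, a = 1
      have ha1 : a = 1 := by omega
      subst ha1
      have hn2' : n = 2 := hn2.symm
      subst hn2'
      by_cases hd1 : d = 1
      · refine ⟨[4], by simp, by simp, ?_, ?_⟩
        · have h := InTd.init (d := d); rwa [if_pos hd1] at h
        · subst hd1
          show hjMat [4] = _
          simp only [hjMat]
          exact prodext (by norm_num) (by norm_num) (by norm_num) (by norm_num)
      · have hd2 : 2 ≤ d := by omega
        refine ⟨3 :: (List.replicate (d - 2) (2:ℤ) ++ [3]), by simp, ?_, ?_, ?_⟩
        · intro x hx
          rcases List.mem_cons.mp hx with rfl | hx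
          · norm_num
          rcases List.mem_append.mp hx with hx | hx
          · have := List.eq_of_mem_replicate hx; omega
          · rw [List.mem_singleton] at hx; omega
        · have h := InTd.init (d := d); rwa [if_neg hd1] at h
        · simp only [hjMat, hjMat_replicate]
          have hc : ((d - 2 : ℕ) : ℤ) = (d:ℤ) - 2 := by
            push_cast [Nat.cast_sub hd2]; ring
          rw [hc]
          exact prodext (by ring) (by ring) (by ring) (by ring)
    · -- 3 ≤ n
      have h2a : 2*a ≠ n := by
        intro hh
        have hdvd : a ∣ n := ⟨2, by omega⟩
        have hdg : a.natAbs ∣ Int.gcd a n :=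
          Nat.dvd_gcd (dvd_refl _) (Int.natAbs_dvd_natAbs.mpr hdvd)
        rw [hg] at hdg
        have := Nat.dvd_one.mp hdg
        omega
      rcases lt_or_gt_of_ne h2a with hlt | hgt
      · -- 2a < n : use type (d, n - a, a), right operation
        have hg' : Int.gcd a (n - a) = 1 := by
          rw [← Int.isCoprime_iff_gcd_eq_one] at hg ⊢
          have h := hg.add_mul_left_right (-1)
          rwa [show n + a * (-1) = n - a by ring] at h
        obtain ⟨c', hne, hent, hT, hm⟩ :=
          ih (n - a) a (by omega) (by omega) ha0 (by omega) hg'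
        refine ⟨plusFirst c' ++ [2], by simp, ?_, InTd.right hT, ?_⟩
        · intro x hx
          rw [List.mem_append] at hx
          rcases hx with hx | hx
          · exact mem_plusFirst hent x hx
          · simp only [List.mem_singleton] at hx; omega
        · rw [hjMat_append, hjMat_plusFirst c' hne, hm]
          exact prodext (by ring) (by ring) (by ring) (by ring)
      · -- 2a > n : use type (d, a, 2a - n), left operation
        have hg' : Int.gcd (2*a - n) a = 1 := by
          rw [← Int.isCoprime_iff_gcd_eq_one] at hg ⊢
          have h := (hg.symm.add_mul_left_left (-2)).neg_left
          rwa [show -(n + a * (-2)) = 2*a - n by ring] at h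
        obtain ⟨c', hne, hent, hT, hm⟩ :=
          ih a (2*a - n) (by omega) (by omega) (by omega) (by omega) hg'
        refine ⟨2 :: plusLast c', by simp, ?_, InTd.left hT, ?_⟩
        · intro x hx
          rcases List.mem_cons.mp hx with rfl | hx
          · norm_num
          · exact mem_plusLast hent x hx
        · show hjMat (2 :: plusLast c') = _
          simp only [hjMat]
          rw [hjMat_plusLast c' hne, hm]
          exact prodext (by ring) (by ring) (by ring) (by ring)

/-- Every T-chain of type `(d,n,a)` is obtained from the initial chain by finitely many
applications of the two augmentation operations. -/
theorem t_chain_generation (d : ℕ) (hd : 1 ≤ d) (n a : ℤ) (hn : 2 ≤ n)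
    (ha0 : 0 < a) (han : a < n) (hgcd : Int.gcd a n = 1)
    (e : List ℤ) (he2 : ∀ x ∈ e, 2 ≤ x)
    (hval : hjVal e = (((d : ℤ) * n ^ 2 : ℤ) : ℚ) / (((d : ℤ) * n * a - 1 : ℤ) : ℚ)) :
    InTd d e := by
  obtain ⟨c, hne, hent, hT, hm⟩ :=
    exists_chain d hd n.toNat n a (by omega) hn ha0 han hgcd
  obtain ⟨_, _, _, hvc⟩ := hjVal_spec c hent
  have h1 : (hjMat c).1 = (d:ℤ) * n ^ 2 := by rw [hm]
  have h2 : (hjMat c).2.2.1 = (d:ℤ) * n * a - 1 := by rw [hm]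
  rw [h1, h2] at hvc
  have hec : hjVal e = hjVal c := by rw [hval, hvc]
  have := hjVal_inj e c he2 hent hec
  rw [this]
  exact hT
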